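/- Let L be a finite meet semilattice and f : L → R a function into a commutative ring. Define the matrix M indexed by L with entries M(a,b) = f(a ∧ b). Then det M = Π_{a ∈ L} ( Σ_{c ≤ a} μ(c,a)·f(c) ). -/
import Mathlib

open Finset Matrix

/-- The "zeta matrix" of a finite partial order has determinant 1. -/
lemma det_zetaMatrix {L : Type*} [Fintype L] [PartialOrder L] [DecidableEq L]
    [DecidableRel ((· ≤ ·) : L → L → Prop)] (R : Type*) [CommRing R] :
    Matrix.det (Matrix.of fun a c : L => if c ≤ a then (1 : R) else 0) = 1 := by
  classical
  set e : L ≃ LinearExtension L :=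
    ⟨toLinearExtension, fun x => x, fun _ => rfl, fun _ => rfl⟩ with he
  letI : Fintype (LinearExtension L) := Fintype.ofEquiv L e
  have hmono : Monotone (e : L → LinearExtension L) := toLinearExtension.monotone'
  rw [← Matrix.det_reindex_self e (Matrix.of fun a c : L => if c ≤ a then (1 : R) else 0)]
  rw [Matrix.det_of_lowerTriangular]
  · refine Finset.prod_eq_one fun i _ => ?_
    simp [Matrix.reindex_apply]
  · intro i j hij
    simp only [Matrix.reindex_apply, Matrix.submatrix_apply, Matrix.of_apply]
    rw [if_neg]
    intro hle
    have := hmono hle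
    simp only [Equiv.apply_symm_apply] at this
    exact absurd this (not_le.2 hij)

/-- **Wilf/Lindström.** For a finite meet semilattice `L` and `f : L → R`, the matrix with
entries `f (a ⊓ b)` has determinant `∏ a, ∑ c ≤ a, μ(c,a) · f(c)`. -/
theorem det_wilf {L : Type*} [Fintype L] [SemilatticeInf L] [DecidableEq L]
    [LocallyFiniteOrder L] [DecidableRel ((· ≤ ·) : L → L → Prop)]
    {R : Type*} [CommRing R] (f : L → R) :
    Matrix.det (Matrix.of fun a b : L => f (a ⊓ b)) =
      ∏ a : L, ∑ c ∈ Finset.univ.filter (· ≤ a), IncidenceAlgebra.mu R c a * f c := by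
  classical
  set g : L → R := fun a => ∑ c ∈ Finset.univ.filter (· ≤ a), IncidenceAlgebra.mu R c a * f c
    with hg
  have key : ∀ x : L, ∑ c ∈ Finset.univ.filter (· ≤ x), g c = f x := by
    intro x
    have swap :
        ∑ c ∈ Finset.univ.filter (· ≤ x), ∑ d ∈ Finset.univ.filter (· ≤ c),
            IncidenceAlgebra.mu R d c * f d
          = ∑ d ∈ Finset.univ.filter (· ≤ x), ∑ c ∈ Finset.Icc d x,
              IncidenceAlgebra.mu R d c * f d := by
      refine Finset.sum_comm' ?_
      intro c d
      simp only [Finset.mem_filter, Finset.mem_univ, true_and, Finset.mem_Icc]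
      constructor
      · rintro ⟨h1, h2⟩; exact ⟨⟨h2, h1⟩, le_trans h2 h1⟩
      · rintro ⟨⟨h2, h3⟩, h1⟩; exact ⟨h3, h2⟩
    rw [hg]
    simp only
    rw [swap]
    have : ∀ d ∈ Finset.univ.filter (· ≤ x),
        ∑ c ∈ Finset.Icc d x, IncidenceAlgebra.mu R d c * f d
          = (if d = x then 1 else 0) * f d := by
      intro d _
      rw [← Finset.sum_mul, IncidenceAlgebra.sum_Icc_mu_right]
    rw [Finset.sum_congr rfl this]
    simp
  set Z : Matrix L L R := Matrix.of fun a c : L => if c ≤ a then (1 : R) else 0 with hZ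
  have hM : (Matrix.of fun a b : L => f (a ⊓ b)) = Z * Matrix.diagonal g * Zᵀ := by
    ext a b
    simp only [Matrix.mul_apply, Matrix.transpose_apply, Matrix.of_apply, hZ,
      Matrix.diagonal_apply]
    have : ∀ j : L, (∑ k : L, (if k ≤ a then (1:R) else 0) * (if k = j then g k else 0)) *
        (if j ≤ b then (1:R) else 0)
          = if j ≤ a ⊓ b then g j else 0 := by
      intro j
      rw [Finset.sum_eq_single j]
      · by_cases h1 : j ≤ a <;> by_cases h2 : j ≤ b <;>
          simp [h1, h2, le_inf_iff]
      · intro k _ hk; simp [hk]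
      · intro h; exact absurd (Finset.mem_univ j) h
    rw [Finset.sum_congr rfl fun j _ => this j]
    rw [← key (a ⊓ b), Finset.sum_filter]
  rw [hM, Matrix.det_mul, Matrix.det_mul, Matrix.det_transpose, Matrix.det_diagonal,
    det_zetaMatrix]
  ring
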